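/- Approximation of Mechanism 3 when some agent wants both facilities: suppose |N_{1,2}| > 0 and let f be Mechanism 3, which then outputs a pair (y_1, y_2) ∈ AP minimizing max(|y_1 − med(x_{N_{1,2}})|, |y_2 − med(x_{N_{1,2}})|). Then for every location profile x ∈ ℝ^n, sc(f(x, p), (x, p)) ≤ (2n + 1) · sc(y, (x, p)) for every feasible outcome y; i.e., the sum cost of Mechanism 3 is at most (2n+1) times the optimal sum cost. -/

import Mathlib

/-- Max-variant cost of an agent at `t` with preference set `P ⊆ {F₁, F₂}`
(facility `k` placed at `y k`): the distance to the farthest facility in `P`. -/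
noncomputable def pcost (P : Finset (Fin 2)) (hP : P.Nonempty) (y : Fin 2 → ℝ)
    (t : ℝ) : ℝ :=
  P.sup' hP fun k => |y k - t|

/-- Facility positions determined by a pair of (1-based) indices into the
alternative multiset `{a 1, …, a m}`. -/
noncomputable def place (a : ℕ → ℝ) (jj : ℕ × ℕ) : Fin 2 → ℝ := ![a jj.1, a jj.2]

/-- A feasible index pair: two distinct copies among the `m` alternatives. -/
def IdxOK (m : ℕ) (jj : ℕ × ℕ) : Prop :=
  1 ≤ jj.1 ∧ jj.1 ≤ m ∧ 1 ≤ jj.2 ∧ jj.2 ≤ m ∧ jj.1 ≠ jj.2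

/-- `jj = (k, k+1)` is an adjacent pair minimizing the Max-variant cost at `t`
among all adjacent pairs. -/
def IsPeakIdx (m : ℕ) (a : ℕ → ℝ) (jj : ℕ × ℕ) (t : ℝ) : Prop :=
  1 ≤ jj.1 ∧ jj.1 < m ∧ jj.2 = jj.1 + 1 ∧
    ∀ j : ℕ, 1 ≤ j → j < m →
      max |a jj.1 - t| |a (jj.1 + 1) - t| ≤ max |a j - t| |a (j + 1) - t|

/-- The `⌈|S|/2⌉`-th smallest value of `x` on the index set `S`. -/
noncomputable def medOf {n : ℕ} (x : Fin n → ℝ) (S : Finset (Fin n)) : ℝ :=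
  ((S.val.map x).sort (· ≤ ·)).getD ((S.card - 1) / 2) 0



lemma pcost_nonneg (P : Finset (Fin 2)) (hP : P.Nonempty) (y : Fin 2 → ℝ) (t : ℝ) :
    0 ≤ pcost P hP y t := by
  obtain ⟨k, hk⟩ := hP
  exact le_trans (abs_nonneg (y k - t)) (Finset.le_sup' (fun k => |y k - t|) hk)

lemma pcost_le_max (P : Finset (Fin 2)) (hP : P.Nonempty) (y : Fin 2 → ℝ) (t : ℝ) :
    pcost P hP y t ≤ max |y 0 - t| |y 1 - t| := by
  apply Finset.sup'_le
  intro k _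
  fin_cases k
  · exact le_max_left _ _
  · exact le_max_right _ _

lemma le_pcost (P : Finset (Fin 2)) (hP : P.Nonempty) (y : Fin 2 → ℝ) (t : ℝ)
    {k : Fin 2} (hk : k ∈ P) : |y k - t| ≤ pcost P hP y t :=
  Finset.le_sup' (fun k => |y k - t|) hk

lemma medOf_mem {n : ℕ} (x : Fin n → ℝ) (S : Finset (Fin n)) (hS : S.Nonempty) :
    ∃ i ∈ S, x i = medOf x S := by
  unfold medOf
  set l := (S.val.map x).sort (· ≤ ·) with hl
  have hlen : l.length = S.card := by
    rw [hl, Multiset.length_sort, Multiset.card_map]; rfl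
  have hidx : (S.card - 1) / 2 < l.length := by
    rw [hlen]; have := Finset.card_pos.mpr hS; omega
  have hmem : l.getD ((S.card - 1)/2) 0 ∈ l := by
    rw [List.getD_eq_getElem l 0 hidx]
    exact List.getElem_mem _
  rw [hl, Multiset.mem_sort] at hmem
  obtain ⟨i, hi, hxi⟩ := Multiset.mem_map.mp hmem
  refine ⟨i, hi, ?_⟩
  rw [hl]
  exact hxi

lemma exists_adj (m : ℕ) (a : ℕ → ℝ)
    (ha : ∀ j k : ℕ, 1 ≤ j → j ≤ k → k ≤ m → a j ≤ a k) (t : ℝ) (j1 j2 : ℕ)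
    (h1 : 1 ≤ j1) (h12 : j1 < j2) (h2 : j2 ≤ m) :
    ∃ j, 1 ≤ j ∧ j < m ∧ max |a j - t| |a (j+1) - t| ≤ max |a j1 - t| |a j2 - t| := by
  rcases le_or_gt t (a j1) with h | h
  · refine ⟨j1, h1, by omega, max_le (le_max_left _ _) ?_⟩
    have h11 : a j1 ≤ a (j1+1) := ha j1 (j1+1) h1 (by omega) (by omega)
    have h22 : a (j1+1) ≤ a j2 := ha _ _ (by omega) (by omega) h2
    have : |a (j1+1) - t| ≤ |a j2 - t| := by
      rw [abs_of_nonneg (by linarith), abs_of_nonneg (by linarith)]; linarith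
    exact this.trans (le_max_right _ _)
  rcases le_or_gt (a j2) t with h' | h'
  · refine ⟨j2 - 1, by omega, by omega, ?_⟩
    have hj2 : j2 - 1 + 1 = j2 := by omega
    rw [hj2]
    refine max_le ?_ (le_max_right _ _)
    have ha1 : a j1 ≤ a (j2-1) := ha _ _ h1 (by omega) (by omega)
    have ha2 : a (j2-1) ≤ a j2 := ha _ _ (by omega) (by omega) h2
    have : |a (j2-1) - t| ≤ |a j1 - t| := by
      rw [abs_of_nonpos (by linarith), abs_of_nonpos (by linarith)]; linarith
    exact this.trans (le_max_left _ _)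
  · set S := (Finset.Ico j1 j2).filter (fun j => a j ≤ t) with hSdef
    have hSne : S.Nonempty := ⟨j1, by
      simp only [hSdef, Finset.mem_filter, Finset.mem_Ico]
      exact ⟨⟨le_refl _, h12⟩, h.le⟩⟩
    set j := S.max' hSne with hjdef
    have hjS : j ∈ S := S.max'_mem hSne
    have hj : (j1 ≤ j ∧ j < j2) ∧ a j ≤ t := by
      simpa only [hSdef, Finset.mem_filter, Finset.mem_Ico] using hjS
    have hup : t ≤ a (j+1) := by
      by_cases hcase : j + 1 = j2
      · rw [hcase]; exact h'.le
      · by_contra hc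
        push_neg at hc
        have hmem : j + 1 ∈ S := by
          simp only [hSdef, Finset.mem_filter, Finset.mem_Ico]
          exact ⟨⟨by omega, by omega⟩, hc.le⟩
        have := S.le_max' _ hmem
        omega
    refine ⟨j, by omega, by omega, max_le ?_ ?_⟩
    · have haj : a j1 ≤ a j := ha _ _ h1 hj.1.1 (by omega)
      have : |a j - t| ≤ |a j1 - t| := by
        rw [abs_of_nonpos (by linarith), abs_of_nonpos (by linarith)]; linarith
      exact this.trans (le_max_left _ _)
    · have haj : a (j+1) ≤ a j2 := ha _ _ (by omega) (by omega) h2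
      have : |a (j+1) - t| ≤ |a j2 - t| := by
        rw [abs_of_nonneg (by linarith), abs_of_nonneg (by linarith)]; linarith
      exact this.trans (le_max_right _ _)

theorem stmt_16 (n m : ℕ) (hn : 0 < n) (hm : 2 ≤ m) (a : ℕ → ℝ)
    (ha : ∀ j k : ℕ, 1 ≤ j → j ≤ k → k ≤ m → a j ≤ a k)
    (p : Fin n → Finset (Fin 2)) (hp : ∀ i, (p i).Nonempty)
    (N12 : Finset (Fin n))
    (hN12 : N12 = Finset.univ.filter fun i => p i = ({0, 1} : Finset (Fin 2)))
    (hne : N12.Nonempty)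
    (f : (Fin n → ℝ) → ℕ × ℕ)
    -- Mechanism 3 (case `|N_{1,2}| > 0`): output an adjacent pair
    -- minimizing the Max-variant cost at `med (x_{N_{1,2}})`
    (hf : ∀ x : Fin n → ℝ, IsPeakIdx m a (f x) (medOf x N12))
    (x : Fin n → ℝ) (jj : ℕ × ℕ) (hjj : IdxOK m jj) :
    (∑ i, pcost (p i) (hp i) (place a (f x)) (x i)) ≤
      (2 * (n : ℝ) + 1) * ∑ i, pcost (p i) (hp i) (place a jj) (x i) := by
  set t := medOf x N12 with ht
  obtain ⟨i0, hi0, hxi0⟩ := medOf_mem x N12 hne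
  have hp0 : p i0 = ({0, 1} : Finset (Fin 2)) := by
    rw [hN12] at hi0; exact (Finset.mem_filter.mp hi0).2
  obtain ⟨hk1, hkm, hk2, hmin⟩ := hf x
  set C := pcost (p i0) (hp i0) (place a jj) (x i0) with hCdef
  have hmemP : ∀ k : Fin 2, k ∈ p i0 := by
    intro k; rw [hp0]; fin_cases k <;> simp
  have hCk : ∀ k : Fin 2, |place a jj k - t| ≤ C := by
    intro k
    rw [ht, ← hxi0]
    exact le_pcost _ _ _ _ (hmemP k)
  have hM_le : max |a (f x).1 - t| |a ((f x).1 + 1) - t| ≤ C := by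
    obtain ⟨h1, h2m, h12', h2m', hne'⟩ := hjj
    have key : ∀ u v : ℕ, 1 ≤ u → u < v → v ≤ m →
        max |a (f x).1 - t| |a ((f x).1 + 1) - t| ≤ max |a u - t| |a v - t| := by
      intro u v hu huv hv
      obtain ⟨j, hj1, hjm, hle⟩ := exists_adj m a ha t u v hu huv hv
      exact (hmin j hj1 hjm).trans hle
    have hmaxle : max |a (f x).1 - t| |a ((f x).1 + 1) - t|
        ≤ max |a jj.1 - t| |a jj.2 - t| := by
      rcases lt_or_gt_of_ne hne' with h | h
      · exact key _ _ h1 h h2m'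
      · rw [max_comm |a jj.1 - t| |a jj.2 - t|]; exact key _ _ h12' h h2m
    refine hmaxle.trans (max_le ?_ ?_)
    · exact hCk 0
    · exact hCk 1
  have hbound : ∀ i, pcost (p i) (hp i) (place a (f x)) (x i) ≤
      pcost (p i) (hp i) (place a jj) (x i) + 2 * C := by
    intro i
    obtain ⟨k, hk⟩ := hp i
    have hd : |t - x i| ≤ pcost (p i) (hp i) (place a jj) (x i) + C := by
      have h1 : |place a jj k - x i| ≤ pcost (p i) (hp i) (place a jj) (x i) :=
        le_pcost _ _ _ _ hk
      have h2 : |place a jj k - t| ≤ C := hCk k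
      calc |t - x i| ≤ |t - place a jj k| + |place a jj k - x i| := abs_sub_le _ _ _
        _ = |place a jj k - t| + |place a jj k - x i| := by rw [abs_sub_comm t]
        _ ≤ C + pcost (p i) (hp i) (place a jj) (x i) := add_le_add h2 h1
        _ = _ := add_comm _ _
    have e0 : |place a (f x) 0 - x i| ≤ C + |t - x i| := by
      calc |place a (f x) 0 - x i|
          ≤ |place a (f x) 0 - t| + |t - x i| := abs_sub_le _ _ _
        _ ≤ C + |t - x i| := by
            have h0 : place a (f x) 0 = a (f x).1 := rfl
            rw [h0]
            exact add_le_add_left ((le_max_left _ _).trans hM_le) _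
    have e1 : |place a (f x) 1 - x i| ≤ C + |t - x i| := by
      calc |place a (f x) 1 - x i|
          ≤ |place a (f x) 1 - t| + |t - x i| := abs_sub_le _ _ _
        _ ≤ C + |t - x i| := by
            have h0 : place a (f x) 1 = a ((f x).1 + 1) := by
              show a (f x).2 = _
              rw [hk2]
            rw [h0]
            exact add_le_add_left ((le_max_right _ _).trans hM_le) _
    calc pcost (p i) (hp i) (place a (f x)) (x i)
        ≤ max |place a (f x) 0 - x i| |place a (f x) 1 - x i| := pcost_le_max _ _ _ _
      _ ≤ C + |t - x i| := max_le e0 e1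
      _ ≤ C + (pcost (p i) (hp i) (place a jj) (x i) + C) := add_le_add_right hd _
      _ = pcost (p i) (hp i) (place a jj) (x i) + 2 * C := by ring
  have hCsum : C ≤ ∑ i, pcost (p i) (hp i) (place a jj) (x i) :=
    Finset.single_le_sum (fun i _ => pcost_nonneg (p i) (hp i) (place a jj) (x i))
      (Finset.mem_univ i0)
  have hn0 : (0 : ℝ) ≤ n := Nat.cast_nonneg n
  calc ∑ i, pcost (p i) (hp i) (place a (f x)) (x i)
      ≤ ∑ i, (pcost (p i) (hp i) (place a jj) (x i) + 2 * C) :=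
        Finset.sum_le_sum fun i _ => hbound i
    _ = (∑ i, pcost (p i) (hp i) (place a jj) (x i)) + (n : ℝ) * (2 * C) := by
        rw [Finset.sum_add_distrib, Finset.sum_const, Finset.card_univ, Fintype.card_fin,
          nsmul_eq_mul]
    _ ≤ (2 * (n : ℝ) + 1) * ∑ i, pcost (p i) (hp i) (place a jj) (x i) := by
        nlinarith [hCsum, hn0]
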